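/- Let n ≥ 1, let R : [0,1] → Mₙ(ℝ) be continuous with R(t) symmetric for every t ∈ [0,1], and let B : [0,1] → Mₙ(ℝ) be twice differentiable with B''(t) + R(t)·B(t) = 0 for all t ∈ [0,1], B(0) = Id, B'(0) symmetric, and B(t) invertible for every t ∈ [0,1]. Then det B(t) > 0 for all t ∈ [0,1], and the function y(t) := log det B(t) satisfies y''(t) + (1/n)·y'(t)² + tr R(t) ≤ 0 for all t ∈ (0,1). -/

import Mathlib

open Set Matrix

/-- The determinant, as a continuous multilinear map in the rows. -/
noncomputable def detCMM (n : ℕ) :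
    ContinuousMultilinearMap ℝ (fun _ : Fin n => (Fin n → ℝ)) ℝ :=
  { (Matrix.detRowAlternating :
      AlternatingMap ℝ (Fin n → ℝ) ℝ (Fin n)).toMultilinearMap with
    cont := by
      exact (continuous_id.matrix_det :
        Continuous fun M : Matrix (Fin n) (Fin n) ℝ => M.det) }

lemma sum_det_updateRow {n : ℕ} (A H : Matrix (Fin n) (Fin n) ℝ) :
    ∑ i, (A.updateRow i (H i)).det = (A.adjugate * H).trace := by
  have key : ∀ i, (A.updateRow i (H i)).det = ∑ j, H i j * A.adjugate j i := by
    intro i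
    have hH : H i = ∑ j, H i j • (Pi.single j 1 : Fin n → ℝ) := by
      ext k
      simp [Pi.single_apply, eq_comm]
    rw [← Matrix.cramer_transpose_apply]
    conv_lhs => rw [hH]
    rw [map_sum, Finset.sum_apply]
    refine Finset.sum_congr rfl fun j _ => ?_
    rw [_root_.map_smul, Pi.smul_apply, smul_eq_mul, Matrix.cramer_transpose_apply,
      ← Matrix.adjugate_apply]
  calc ∑ i, (A.updateRow i (H i)).det
      = ∑ i, ∑ j, H i j * A.adjugate j i := Finset.sum_congr rfl fun i _ => key i
    _ = ∑ j, ∑ i, H i j * A.adjugate j i := Finset.sum_comm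
    _ = (A.adjugate * H).trace := by
        simp only [Matrix.trace, Matrix.diag, Matrix.mul_apply]
        exact Finset.sum_congr rfl fun j _ => Finset.sum_congr rfl fun i _ => mul_comm _ _

lemma det_hasDerivWithinAt {n : ℕ} {A : ℝ → Matrix (Fin n) (Fin n) ℝ}
    {A' : Matrix (Fin n) (Fin n) ℝ} {s : Set ℝ} {t : ℝ}
    (h : ∀ i j, HasDerivWithinAt (fun u => A u i j) (A' i j) s t) :
    HasDerivWithinAt (fun u => (A u).det) (((A t).adjugate * A').trace) s t := by
  have hcurve : HasDerivWithinAt (fun u (i j : Fin n) => A u i j)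
      (fun i j => A' i j) s t :=
    hasDerivWithinAt_pi.2 fun i => hasDerivWithinAt_pi.2 fun j => h i j
  have hd := ((detCMM n).hasFDerivAt (fun i j => A t i j)).comp_hasDerivWithinAt t hcurve
  have key : (((A t).adjugate * A').trace)
      = (detCMM n).linearDeriv (fun i j => A t i j) (fun i j => A' i j) := by
    rw [ContinuousMultilinearMap.linearDeriv_apply, ← sum_det_updateRow]
    rfl
  rw [key]
  exact hd

lemma det_hasDerivAt {n : ℕ} {A : ℝ → Matrix (Fin n) (Fin n) ℝ}
    {A' : Matrix (Fin n) (Fin n) ℝ} {t : ℝ}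
    (h : ∀ i j, HasDerivAt (fun u => A u i j) (A' i j) t) :
    HasDerivAt (fun u => (A u).det) (((A t).adjugate * A').trace) t := by
  rw [← hasDerivWithinAt_univ]
  exact det_hasDerivWithinAt fun i j => (h i j).hasDerivWithinAt

lemma trace_sq_le_card_mul_trace_sq {n : ℕ} {U : Matrix (Fin n) (Fin n) ℝ}
    (hU : U.IsSymm) : U.trace ^ 2 ≤ (n : ℝ) * (U * U).trace := by
  have hsym : ∀ i k, U k i = U i k := fun i k => by
    conv_lhs => rw [← hU]
    rfl
  have h1 : (U * U).trace = ∑ i, ∑ k, U i k ^ 2 := by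
    simp only [Matrix.trace, Matrix.diag, Matrix.mul_apply]
    exact Finset.sum_congr rfl fun i _ => Finset.sum_congr rfl fun k _ => by
      rw [hsym i k, sq]
  have h2 : (∑ i, U i i) ^ 2 ≤ (Finset.univ.card (α := Fin n) : ℝ) * ∑ i, U i i ^ 2 :=
    sq_sum_le_card_mul_sum_sq
  have h3 : ∑ i, U i i ^ 2 ≤ ∑ i, ∑ k, U i k ^ 2 :=
    Finset.sum_le_sum fun i _ =>
      Finset.single_le_sum (f := fun k => U i k ^ 2)
        (fun k _ => sq_nonneg _) (Finset.mem_univ i)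
  have hcard : (Finset.univ.card (α := Fin n) : ℝ) = (n : ℝ) := by simp
  have htr : U.trace = ∑ i, U i i := rfl
  rw [htr, h1]
  calc (∑ i, U i i) ^ 2 ≤ (n : ℝ) * ∑ i, U i i ^ 2 := by rw [← hcard]; exact h2
    _ ≤ (n : ℝ) * ∑ i, ∑ k, U i k ^ 2 :=
        mul_le_mul_of_nonneg_left h3 (Nat.cast_nonneg n)

/-- **Jacobian (log-determinant) estimate from the matrix Jacobi equation.**
If `B : [0,1] → Mₙ(ℝ)` is twice differentiable (entrywise) with `B'' + R·B = 0`, `B 0 = Id`,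
`B' 0` symmetric, `R t` symmetric, and `B t` invertible for all `t ∈ [0,1]`, then
`det B t > 0` on `[0,1]` and `y := log det B` satisfies
`y'' + (1/n)·(y')² + tr R ≤ 0` on `(0,1)`. -/
theorem log_det_jacobi_estimate {n : ℕ} (hn : 1 ≤ n)
    (R B B' B'' : ℝ → Matrix (Fin n) (Fin n) ℝ)
    (hRcont : ∀ i j, ContinuousOn (fun t => R t i j) (Icc 0 1))
    (hRsymm : ∀ t ∈ Icc (0:ℝ) 1, (R t).IsSymm)
    (hB : ∀ t ∈ Icc (0:ℝ) 1, ∀ i j, HasDerivWithinAt (fun s => B s i j) (B' t i j) (Icc 0 1) t)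
    (hB' : ∀ t ∈ Icc (0:ℝ) 1, ∀ i j, HasDerivWithinAt (fun s => B' s i j) (B'' t i j) (Icc 0 1) t)
    (hJacobi : ∀ t ∈ Icc (0:ℝ) 1, B'' t + R t * B t = 0)
    (hB0 : B 0 = 1)
    (hB'0 : (B' 0).IsSymm)
    (hinv : ∀ t ∈ Icc (0:ℝ) 1, IsUnit (B t)) :
    (∀ t ∈ Icc (0:ℝ) 1, 0 < (B t).det) ∧
      ∀ t ∈ Ioo (0:ℝ) 1,
        deriv (deriv (fun s => Real.log (B s).det)) t
          + (1 / (n : ℝ)) * (deriv (fun s => Real.log (B s).det) t) ^ 2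
          + (R t).trace ≤ 0 := by
  have h0Icc : (0:ℝ) ∈ Icc (0:ℝ) 1 := by norm_num
  have hdet_unit : ∀ t ∈ Icc (0:ℝ) 1, IsUnit (B t).det := fun t ht =>
    (Matrix.isUnit_iff_isUnit_det (B t)).mp (hinv t ht)
  have hdet_ne : ∀ t ∈ Icc (0:ℝ) 1, (B t).det ≠ 0 := fun t ht =>
    (hdet_unit t ht).ne_zero
  have hdcont : ContinuousOn (fun s => (B s).det) (Icc 0 1) := fun t ht =>
    (det_hasDerivWithinAt (fun i j => hB t ht i j)).continuousWithinAt
  -- positivity of the determinant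
  have hpos : ∀ t ∈ Icc (0:ℝ) 1, 0 < (B t).det := by
    intro t ht
    by_contra hle
    push_neg at hle
    have hlt : (B t).det < 0 := lt_of_le_of_ne hle (hdet_ne t ht)
    have h0 : (B 0).det = 1 := by rw [hB0, Matrix.det_one]
    have hsub : Icc (0:ℝ) t ⊆ Icc 0 1 := Icc_subset_Icc le_rfl ht.2
    have hmem : (0:ℝ) ∈ Icc ((B t).det) ((B 0).det) := by
      rw [h0]; exact ⟨le_of_lt hlt, by norm_num⟩
    obtain ⟨s, hs, hds⟩ := intermediate_value_Icc' ht.1 (hdcont.mono hsub) hmem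
    exact hdet_ne s (hsub hs) hds
  refine ⟨hpos, ?_⟩
  intro t ht
  have htIcc : t ∈ Icc (0:ℝ) 1 := Ioo_subset_Icc_self ht
  have hmemnhds : ∀ s ∈ Ioo (0:ℝ) 1, Icc (0:ℝ) 1 ∈ nhds s := fun s hs =>
    Icc_mem_nhds hs.1 hs.2
  have hBat : ∀ s ∈ Ioo (0:ℝ) 1, ∀ i j, HasDerivAt (fun u => B u i j) (B' s i j) s :=
    fun s hs i j => (hB s (Ioo_subset_Icc_self hs) i j).hasDerivAt (hmemnhds s hs)
  have hB'at : ∀ s ∈ Ioo (0:ℝ) 1, ∀ i j, HasDerivAt (fun u => B' u i j) (B'' s i j) s :=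
    fun s hs i j => (hB' s (Ioo_subset_Icc_self hs) i j).hasDerivAt (hmemnhds s hs)
  set C : ℝ → Matrix (Fin n) (Fin n) ℝ := fun s => (B s)⁻¹ with hC_def
  have hCB : ∀ s ∈ Icc (0:ℝ) 1, C s * B s = 1 := fun s hs =>
    Matrix.nonsing_inv_mul (B s) (hdet_unit s hs)
  have hBC : ∀ s ∈ Icc (0:ℝ) 1, B s * C s = 1 := fun s hs =>
    Matrix.mul_nonsing_inv (B s) (hdet_unit s hs)
  have hCsmul : ∀ s, C s = ((B s).det)⁻¹ • (B s).adjugate := by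
    intro s
    show (B s)⁻¹ = ((B s).det)⁻¹ • (B s).adjugate
    rw [Matrix.inv_def, Ring.inverse_eq_inv']
  set g : ℝ → ℝ := fun s => (C s * B' s).trace with hg_def
  have hdet_deriv : ∀ s ∈ Ioo (0:ℝ) 1,
      HasDerivAt (fun u => (B u).det) (((B s).adjugate * B' s).trace) s :=
    fun s hs => det_hasDerivAt (hBat s hs)
  -- first derivative of y = log det B
  have hy' : ∀ s ∈ Ioo (0:ℝ) 1,
      HasDerivAt (fun u => Real.log (B u).det) (g s) s := by
    intro s hs
    have hlog := (Real.hasDerivAt_log (hdet_ne s (Ioo_subset_Icc_self hs))).comp s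
      (hdet_deriv s hs)
    have : g s = ((B s).det)⁻¹ * ((B s).adjugate * B' s).trace := by
      show (C s * B' s).trace = _
      rw [hCsmul s, Matrix.smul_mul, Matrix.trace_smul, smul_eq_mul]
    rw [this]
    exact hlog
  -- differentiability of the adjugate entries
  have hadj : ∀ i j, DifferentiableAt ℝ (fun s => (B s).adjugate i j) t := by
    intro i j
    have hcurve : HasDerivAt
        (fun s => Function.update (fun k l => B s k l) j (Pi.single i (1:ℝ)))
        (Function.update (fun k l => B' t k l) j 0) t := by
      refine hasDerivAt_pi.2 fun k => ?_
      by_cases hk : k = j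
      · subst hk
        have h1 : (fun s => Function.update (fun k l => B s k l) k (Pi.single i (1:ℝ)) k)
            = fun _ => Pi.single i (1:ℝ) := by
          funext s; rw [Function.update_self]
        have h2 : Function.update (fun k l => B' t k l) k (0 : Fin n → ℝ) k = 0 :=
          Function.update_self _ _ _
        rw [h1, h2]
        exact hasDerivAt_const _ _
      · have h1 : (fun s => Function.update (fun k l => B s k l) j (Pi.single i (1:ℝ)) k)
            = fun s (l : Fin n) => B s k l := by
          funext s; rw [Function.update_of_ne hk]
        have h2 : Function.update (fun k l => B' t k l) j (0 : Fin n → ℝ) k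
            = fun l => B' t k l := Function.update_of_ne hk _ _
        rw [h1, h2]
        exact hasDerivAt_pi.2 fun l => hBat t ht k l
    have hd := ((detCMM n).hasFDerivAt
      (Function.update (fun k l => B t k l) j (Pi.single i (1:ℝ)))).comp_hasDerivAt t hcurve
    have heq : (fun s => (B s).adjugate i j)
        = fun s => detCMM n (Function.update (fun k l => B s k l) j (Pi.single i (1:ℝ))) := by
      funext s
      rw [Matrix.adjugate_apply]
      rfl
    rw [heq]
    exact hd.differentiableAt
  -- differentiability of the entries of C = B⁻¹
  have hC_diff : ∀ i j, DifferentiableAt ℝ (fun s => C s i j) t := by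
    intro i j
    have h1 : DifferentiableAt ℝ (fun s => (B s).det) t :=
      (hdet_deriv t ht).differentiableAt
    have h2 : DifferentiableAt ℝ (fun s => ((B s).det)⁻¹) t :=
      h1.inv (hdet_ne t htIcc)
    have heq : (fun s => C s i j)
        = fun s => ((B s).det)⁻¹ * (B s).adjugate i j := by
      funext s
      rw [hCsmul s, Matrix.smul_apply, smul_eq_mul]
    rw [heq]
    exact h2.mul (hadj i j)
  set D : Matrix (Fin n) (Fin n) ℝ := Matrix.of fun i j => deriv (fun s => C s i j) t
    with hD_def
  have hD : ∀ i j, HasDerivAt (fun s => C s i j) (D i j) t := fun i j =>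
    (hC_diff i j).hasDerivAt
  -- pin down D by differentiating C * B = 1
  have hDB : D * B t + C t * B' t = 0 := by
    ext i j
    have hprod : HasDerivAt (fun s => ∑ k, C s i k * B s k j)
        (∑ k, (D i k * B t k j + C t i k * B' t k j)) t :=
      HasDerivAt.fun_sum fun k _ => (hD i k).mul (hBat t ht k j)
    have hconstev : (fun s => ∑ k, C s i k * B s k j)
        =ᶠ[nhds t] fun _ => (1 : Matrix (Fin n) (Fin n) ℝ) i j := by
      filter_upwards [isOpen_Ioo.mem_nhds ht] with s hs
      calc ∑ k, C s i k * B s k j = (C s * B s) i j := (Matrix.mul_apply).symm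
        _ = (1 : Matrix (Fin n) (Fin n) ℝ) i j := by rw [hCB s (Ioo_subset_Icc_self hs)]
    have hconst : HasDerivAt (fun _ : ℝ => (1 : Matrix (Fin n) (Fin n) ℝ) i j)
        (∑ k, (D i k * B t k j + C t i k * B' t k j)) t :=
      (hconstev.hasDerivAt_iff).mp hprod
    have h0 : (∑ k, (D i k * B t k j + C t i k * B' t k j)) = 0 :=
      hconst.unique (hasDerivAt_const _ _)
    rw [Matrix.add_apply, Matrix.mul_apply, Matrix.mul_apply, Matrix.zero_apply,
      ← Finset.sum_add_distrib]
    exact h0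
  have hD_eq : D = -(C t * B' t * C t) := by
    have h1 : D * B t = -(C t * B' t) := eq_neg_of_add_eq_zero_left hDB
    calc D = D * (B t * C t) := by rw [hBC t htIcc, mul_one]
      _ = (D * B t) * C t := by rw [Matrix.mul_assoc]
      _ = (-(C t * B' t)) * C t := by rw [h1]
      _ = -(C t * B' t * C t) := by rw [Matrix.neg_mul]
  -- derivative of g at t
  have hg : HasDerivAt g ((D * B' t + C t * B'' t).trace) t := by
    have hsum : HasDerivAt (fun s => ∑ i, ∑ k, C s i k * B' s k i)
        (∑ i, ∑ k, (D i k * B' t k i + C t i k * B'' t k i)) t :=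
      HasDerivAt.fun_sum fun i _ => HasDerivAt.fun_sum fun k _ => (hD i k).mul (hB'at t ht k i)
    have hfun : g = fun s => ∑ i, ∑ k, C s i k * B' s k i := by
      funext s
      simp [hg_def, Matrix.trace, Matrix.diag, Matrix.mul_apply]
    have hval : (D * B' t + C t * B'' t).trace
        = ∑ i, ∑ k, (D i k * B' t k i + C t i k * B'' t k i) := by
      simp [Matrix.trace, Matrix.diag, Matrix.add_apply, Matrix.mul_apply,
        Finset.sum_add_distrib]
    rw [hfun, hval]
    exact hsum
  -- Wronskian identity: (B s)ᵀ * B' s = (B' s)ᵀ * B s on [0,1]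
  have hW2 : ∀ s ∈ Icc (0:ℝ) 1, (B s)ᵀ * B'' s - (B'' s)ᵀ * B s = 0 := by
    intro s hs
    have hB''s : B'' s = -(R s * B s) := eq_neg_of_add_eq_zero_left (hJacobi s hs)
    have hRs : (R s)ᵀ = R s := hRsymm s hs
    rw [hB''s, Matrix.transpose_neg, Matrix.transpose_mul, hRs, Matrix.mul_neg,
      Matrix.neg_mul, sub_neg_eq_add, Matrix.mul_assoc, neg_add_cancel]
  have hWconst : ∀ s ∈ Icc (0:ℝ) 1, (B s)ᵀ * B' s - (B' s)ᵀ * B s = 0 := by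
    have key : ∀ i j, ∀ s ∈ Icc (0:ℝ) 1,
        HasDerivWithinAt (fun u => ((B u)ᵀ * B' u - (B' u)ᵀ * B u) i j) 0 (Icc 0 1) s := by
      intro i j s hs
      have hfun : (fun u => ((B u)ᵀ * B' u - (B' u)ᵀ * B u) i j)
          = fun u => (∑ k, B u k i * B' u k j) - ∑ k, B' u k i * B u k j := by
        funext u
        simp [Matrix.sub_apply, Matrix.mul_apply, Matrix.transpose_apply]
      have hder : HasDerivWithinAt
          (fun u => (∑ k, B u k i * B' u k j) - ∑ k, B' u k i * B u k j)
          ((∑ k, (B' s k i * B' s k j + B s k i * B'' s k j))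
            - ∑ k, (B'' s k i * B s k j + B' s k i * B' s k j)) (Icc 0 1) s :=
        (HasDerivWithinAt.fun_sum fun k _ => (hB s hs k i).mul (hB' s hs k j)).sub
          (HasDerivWithinAt.fun_sum fun k _ => (hB' s hs k i).mul (hB s hs k j))
      have hz : ((B s)ᵀ * B'' s - (B'' s)ᵀ * B s) i j = 0 := by
        rw [hW2 s hs]
        rfl
      have hz' : (∑ k, B s k i * B'' s k j) - (∑ k, B'' s k i * B s k j) = 0 := by
        simpa [Matrix.sub_apply, Matrix.mul_apply, Matrix.transpose_apply] using hz
      have hval0 : (∑ k, (B' s k i * B' s k j + B s k i * B'' s k j))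
          - ∑ k, (B'' s k i * B s k j + B' s k i * B' s k j) = 0 := by
        rw [Finset.sum_add_distrib, Finset.sum_add_distrib]
        linarith [hz']
      rw [hfun]
      exact hval0 ▸ hder
    intro s hs
    ext i j
    have hbound := Convex.norm_image_sub_le_of_norm_hasDerivWithin_le
      (f := fun u => ((B u)ᵀ * B' u - (B' u)ᵀ * B u) i j) (f' := fun _ => (0:ℝ))
      (C := 0) (fun x hx => key i j x hx) (fun x _ => by simp) (convex_Icc 0 1) h0Icc hs
    have hf0 : ((B 0)ᵀ * B' 0 - (B' 0)ᵀ * B 0) = 0 := by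
      rw [hB0, Matrix.transpose_one, one_mul, mul_one, hB'0, sub_self]
    simp only [hf0, Matrix.zero_apply, sub_zero, zero_mul] at hbound
    have h2 := norm_le_zero_iff.mp hbound
    simpa using h2
  -- symmetry of U = B' t * C t
  have hUsymm : (B' t * C t).IsSymm := by
    have h1 : (B t)ᵀ * B' t = (B' t)ᵀ * B t := sub_eq_zero.mp (hWconst t htIcc)
    have h2 : (B' t)ᵀ = (B t)ᵀ * (B' t * C t) := by
      calc (B' t)ᵀ = (B' t)ᵀ * 1 := (mul_one _).symm
        _ = (B' t)ᵀ * (B t * C t) := by rw [hBC t htIcc]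
        _ = ((B' t)ᵀ * B t) * C t := by rw [Matrix.mul_assoc]
        _ = ((B t)ᵀ * B' t) * C t := by rw [h1]
        _ = (B t)ᵀ * (B' t * C t) := by rw [Matrix.mul_assoc]
    show (B' t * C t)ᵀ = B' t * C t
    rw [Matrix.transpose_mul, h2, ← Matrix.mul_assoc, ← Matrix.transpose_mul,
      hBC t htIcc, Matrix.transpose_one, one_mul]
  -- assemble
  have hyd : deriv (fun s => Real.log (B s).det) t = g t := (hy' t ht).deriv
  have hev : deriv (fun s => Real.log (B s).det) =ᶠ[nhds t] g := by
    filter_upwards [isOpen_Ioo.mem_nhds ht] with s hs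
    exact (hy' s hs).deriv
  have hyd2 : deriv (deriv (fun s => Real.log (B s).det)) t
      = (D * B' t + C t * B'' t).trace := by
    rw [hev.deriv_eq, hg.deriv]
  have hB''t : B'' t = -(R t * B t) := eq_neg_of_add_eq_zero_left (hJacobi t htIcc)
  have htr1 : (C t * B'' t).trace = -(R t).trace := by
    rw [hB''t, Matrix.mul_neg, Matrix.trace_neg]
    congr 1
    calc (C t * (R t * B t)).trace = ((R t * B t) * C t).trace :=
        Matrix.trace_mul_comm _ _
      _ = (R t * (B t * C t)).trace := by rw [Matrix.mul_assoc]
      _ = (R t).trace := by rw [hBC t htIcc, mul_one]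
  have htr2 : (D * B' t).trace = -((B' t * C t) * (B' t * C t)).trace := by
    rw [hD_eq, Matrix.neg_mul, Matrix.trace_neg]
    congr 1
    calc ((C t * B' t * C t) * B' t).trace = (B' t * (C t * B' t * C t)).trace :=
        Matrix.trace_mul_comm _ _
      _ = ((B' t * C t) * (B' t * C t)).trace := by simp only [Matrix.mul_assoc]
  have hgt : g t = ((B' t * C t)).trace := by
    rw [hg_def]
    exact Matrix.trace_mul_comm _ _
  have hn' : (0:ℝ) < (n : ℝ) := by exact_mod_cast Nat.lt_of_lt_of_le Nat.zero_lt_one hn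
  have hcs := trace_sq_le_card_mul_trace_sq hUsymm
  have hdiv : (1 / (n : ℝ)) * ((B' t * C t).trace) ^ 2
      ≤ ((B' t * C t) * (B' t * C t)).trace := by
    rw [one_div, inv_mul_le_iff₀ hn']
    exact hcs
  rw [hyd2, hyd, hgt, Matrix.trace_add, htr1, htr2]
  linarith [hdiv]
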